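/- Assume N is commutative and the cubing map n ↦ n³ is a bijection of N onto itself. Then every 1-cocycle u ∈ Z¹(PSL(2,ℤ), N) is cohomologous to a cocycle v with v(τ) = 1; in fact, writing m^{1/3} for the unique cube root of m and Y = u(τ), the element n = (Y²)^{1/3}·(τ•Y)^{1/3} satisfies n⁻¹·Y·(τ•n) = 1. -/

import Mathlib

/-- A 1-cocycle of `G` in a (possibly noncommutative) group `N` on which `G`
acts on the left by group automorphisms: `u (g₁ * g₂) = u g₁ * g₁ • u g₂`. -/
def IsCocycle {G N : Type*} [Group G] [Group N] [MulDistribMulAction G N]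
    (u : G → N) : Prop :=
  ∀ g₁ g₂ : G, u (g₁ * g₂) = u g₁ * g₁ • u g₂

/-- Two maps `u v : G → N` are cohomologous if there is `n : N` with
`v g = n⁻¹ * u g * g • n` for all `g`. -/
def Cohomologous {G N : Type*} [Group G] [Group N] [MulDistribMulAction G N]
    (u v : G → N) : Prop :=
  ∃ n : N, ∀ g : G, v g = n⁻¹ * u g * g • n

/-- The group `SL(2,ℤ)`. -/
abbrev SL2Z := Matrix.SpecialLinearGroup (Fin 2) ℤ

/-- The group `PSL(2,ℤ)`, the quotient of `SL(2,ℤ)` by its center `{±1}`. -/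
abbrev PSL2Z := SL2Z ⧸ Subgroup.center SL2Z

/-- The image `σ` of the matrix `((0,-1),(1,0))` in `PSL(2,ℤ)`. -/
def pslSigma : PSL2Z :=
  QuotientGroup.mk ⟨!![0, -1; 1, 0], by norm_num [Matrix.det_fin_two_of]⟩

/-- The image `τ` of the matrix `((0,-1),(1,-1))` in `PSL(2,ℤ)`. -/
def pslTau : PSL2Z :=
  QuotientGroup.mk ⟨!![0, -1; 1, -1], by norm_num [Matrix.det_fin_two_of]⟩


lemma tau_cube : pslTau ^ 3 = 1 := by
  show (QuotientGroup.mk _ : PSL2Z) ^ 3 = 1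
  erw [← QuotientGroup.mk_pow, ← QuotientGroup.mk_one]
  congr 1
  ext i j
  erw [Matrix.SpecialLinearGroup.coe_pow]
  fin_cases i <;> fin_cases j <;>
    simp [pow_succ, Matrix.SpecialLinearGroup.coe_mul, Matrix.mul_apply, Fin.sum_univ_succ]

theorem cohomologous_to_tau_one {N : Type*} [CommGroup N]
    [MulDistribMulAction PSL2Z N]
    (hcube : Function.Bijective fun n : N => n ^ 3)
    (u : PSL2Z → N) (hu : IsCocycle u) :
    (∀ a b : N, a ^ 3 = u pslTau ^ 2 → b ^ 3 = pslTau • u pslTau →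
      (a * b)⁻¹ * u pslTau * pslTau • (a * b) = 1) ∧
    ∃ v : PSL2Z → N, IsCocycle v ∧ Cohomologous u v ∧ v pslTau = 1 := by
  have hu1 : u 1 = 1 := by
    have := hu 1 1
    simpa using this
  set Y := u pslTau with hY
  set p := pslTau • Y with hp
  set q := pslTau • p with hq
  have hrel : Y * p * q = 1 := by
    have h3 : pslTau * (pslTau * pslTau) = 1 := by
      have := tau_cube
      rw [pow_succ, pow_succ, pow_one, mul_assoc] at this
      exact this
    have h2 := hu pslTau pslTau
    have h1 := hu pslTau (pslTau * pslTau)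
    rw [h3, hu1, h2, smul_mul', ← mul_assoc] at h1
    exact h1.symm
  have key : ∀ a b : N, a ^ 3 = Y ^ 2 → b ^ 3 = p →
      (a * b)⁻¹ * Y * pslTau • (a * b) = 1 := by
    intro a b ha hb
    apply hcube.1
    show ((a * b)⁻¹ * Y * pslTau • (a * b)) ^ 3 = (1 : N) ^ 3
    have hn3 : (a * b) ^ 3 = Y ^ 2 * p := by rw [mul_pow, ha, hb]
    calc ((a * b)⁻¹ * Y * pslTau • (a * b)) ^ 3
        = ((a * b) ^ 3)⁻¹ * Y ^ 3 * pslTau • (a * b) ^ 3 := by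
          rw [mul_pow, mul_pow, inv_pow, smul_pow']
      _ = (Y ^ 2 * p)⁻¹ * Y ^ 3 * (p ^ 2 * q) := by
          rw [hn3, smul_mul', smul_pow', hp]
      _ = (Y ^ 2 * p)⁻¹ * ((Y ^ 2 * p) * (Y * p * q)) := by
          rw [mul_assoc]
          congr 1
          simp [pow_succ, mul_comm, mul_left_comm, mul_assoc]
      _ = Y * p * q := inv_mul_cancel_left _ _
      _ = (1 : N) ^ 3 := by rw [hrel, one_pow]
  refine ⟨key, ?_⟩
  obtain ⟨a, ha⟩ := hcube.2 (Y ^ 2)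
  obtain ⟨b, hb⟩ := hcube.2 p
  refine ⟨fun g => (a * b)⁻¹ * u g * g • (a * b), ?_, ⟨a * b, fun g => rfl⟩,
    key a b ha hb⟩
  intro g₁ g₂
  simp only [hu g₁ g₂, smul_mul', smul_inv', mul_smul]
  group
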